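/- If a₁ < a₂ < ⋯ < aₙ are positive integers, then a₁³ + a₂³ + ⋯ + aₙ³ ≥ (a₁ + a₂ + ⋯ + aₙ)², with equality if and only if aₖ = k for all 1 ≤ k ≤ n. -/

import Mathlib

lemma gdiff_mono {m : ℕ} (a : Fin m → ℤ) (hmono : StrictMono a) :
    Monotone (fun i : Fin m => a i - (i : ℤ)) := by
  cases m with
  | zero => intro i; exact absurd i.2 (by omega)
  | succ n =>
    rw [Fin.monotone_iff_le_succ]
    intro i
    have h1 : a i.castSucc < a i.succ := hmono (Fin.castSucc_lt_succ (i := i))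
    simp only [Fin.coe_castSucc, Fin.val_succ]
    push_cast
    omega

lemma idx_le {m : ℕ} (a : Fin m → ℤ) (hpos : ∀ k, 0 < a k)
    (hmono : StrictMono a) (k : Fin m) : (k : ℤ) + 1 ≤ a k := by
  cases m with
  | zero => exact absurd k.2 (by omega)
  | succ n =>
    have h := gdiff_mono a hmono (Fin.zero_le k)
    have h0 := hpos 0
    simp only [Fin.val_zero, Int.ofNat_zero, Nat.cast_zero] at h
    omega

lemma sum_id_aux (n : ℕ) : 2 * (∑ i : Fin n, ((i : ℤ) + 1)) = n * (n + 1) := by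
  induction n with
  | zero => simp
  | succ m ih =>
    rw [Fin.sum_univ_castSucc]
    push_cast
    push_cast at ih
    simp only [Fin.coe_castSucc] at *
    linarith

theorem cubes_ge_square_sum (n : ℕ) (a : Fin n → ℤ) (hpos : ∀ k, 0 < a k)
    (hmono : StrictMono a) :
    (∑ k, a k) ^ 2 ≤ ∑ k, (a k) ^ 3 ∧
      (∑ k, (a k) ^ 3 = (∑ k, a k) ^ 2 ↔ ∀ k : Fin n, a k = (k : ℤ) + 1) := by
  induction n with
  | zero => simp
  | succ m ih =>
    set b : Fin m → ℤ := fun i => a i.castSucc with hb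
    have hbpos : ∀ k, 0 < b k := fun k => hpos _
    have hbmono : StrictMono b := fun i j h => hmono (by simpa using h)
    obtain ⟨IH1, IH2⟩ := ih b hbpos hbmono
    set S := ∑ i : Fin m, b i with hS
    set C := ∑ i : Fin m, (b i) ^ 3 with hC
    set M := a (Fin.last m) with hM
    have hsum1 : ∑ k, a k = S + M := by rw [Fin.sum_univ_castSucc]
    have hsum2 : ∑ k, (a k) ^ 3 = C + M ^ 3 := by rw [Fin.sum_univ_castSucc]
    have hMpos : 0 < M := hpos _
    have hMge : (m : ℤ) + 1 ≤ M := by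
      have := idx_le a hpos hmono (Fin.last m)
      simpa using this
    -- key : 2 * S + M ≤ M ^ 2
    have hbound : ∀ i : Fin m, b i ≤ M - (m : ℤ) + i := by
      intro i
      have := gdiff_mono a hmono (Fin.le_last i.castSucc)
      simp only [Fin.coe_castSucc, Fin.val_last] at this
      simp only [hb]
      omega
    have hSle : S ≤ ∑ i : Fin m, (M - (m : ℤ) + i) := Finset.sum_le_sum fun i _ => hbound i
    have hsum3 : 2 * ∑ i : Fin m, (M - (m : ℤ) + i) = 2 * m * (M - m) + m * (m + 1) - 2 * m := by
      have := sum_id_aux m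
      rw [Finset.sum_add_distrib, Finset.sum_const] at *
      simp only [Finset.card_univ, Fintype.card_fin, nsmul_eq_mul] at *
      have h2 : (∑ i : Fin m, (i : ℤ)) = (∑ i : Fin m, ((i : ℤ) + 1)) - m := by
        rw [Finset.sum_add_distrib, Finset.sum_const]
        simp
      rw [h2]
      linarith
    have key : 2 * S + M ≤ M ^ 2 := by nlinarith [hSle, hsum3, hMge]
    rw [hsum1, hsum2]
    constructor
    · nlinarith [IH1, key, hMpos]
    constructor
    · intro heq
      have hC0 : C = S ^ 2 := by nlinarith [IH1, key, hMpos]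
      have hM0 : M ^ 2 - M - 2 * S = 0 := by nlinarith [IH1, key, hMpos]
      have hball := IH2.mp hC0
      have hS0 : 2 * S = m * (m + 1) := by
        rw [hS]
        have : ∀ i : Fin m, b i = (i : ℤ) + 1 := hball
        rw [Finset.sum_congr rfl fun i _ => this i]
        exact sum_id_aux m
      have hMeq : M = m + 1 := by nlinarith [hM0, hS0, hMpos]
      intro k
      refine Fin.lastCases ?_ ?_ k
      · simpa using hMeq
      · intro i
        have := hball i
        simpa using this
    · intro hall
      have hC0 : C = S ^ 2 := IH2.mpr fun i => by simpa using hall i.castSucc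
      have hMeq : M = m + 1 := by
        have := hall (Fin.last m); simpa using this
      have hS0 : 2 * S = m * (m + 1) := by
        rw [hS]
        have : ∀ i : Fin m, b i = (i : ℤ) + 1 := fun i => by simpa using hall i.castSucc
        rw [Finset.sum_congr rfl fun i _ => this i]
        exact sum_id_aux m
      linear_combination hC0 + M * (M + (m : ℤ)) * hMeq - M * hS0
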